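/- arXiv:1703.10637 — 4 statements merged into one kernel-verified Lean document; each statement's English description precedes it below -/
import Mathlib

section
/- Let x ∈ ℝⁿ and κ ≤ n. Then ‖x‖₀ ≤ κ (i.e., x has at most κ nonzero components) if and only if there exists y ∈ ℝⁿ with 0 ≤ yᵢ ≤ 1 for all i, xᵢ·yᵢ = 0 for all i, and ∑ᵢ yᵢ ≥ n − κ. -/
theorem card_constraint_continuous_reformulation (n κ : ℕ) (hκ : κ ≤ n)
    (x : Fin n → ℝ) :
    (Finset.univ.filter (fun i => x i ≠ 0)).card ≤ κ ↔
      ∃ y : Fin n → ℝ,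
        (∀ i, 0 ≤ y i ∧ y i ≤ 1) ∧
        (∀ i, x i * y i = 0) ∧
        ((n : ℝ) - κ ≤ ∑ i, y i) := by
  have hsplit : (Finset.univ.filter (fun i => x i = 0)).card
      + (Finset.univ.filter (fun i => x i ≠ 0)).card = n := by
    rw [Finset.card_filter_add_card_filter_not (p := fun i => x i = 0)]
    simp
  constructor
  · intro h
    refine ⟨fun i => if x i = 0 then 1 else 0, ?_, ?_, ?_⟩
    · intro i; by_cases hx : x i = 0 <;> simp [hx]
    · intro i; by_cases hx : x i = 0 <;> simp [hx]
    · have : (∑ i, (if x i = 0 then (1:ℝ) else 0))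
          = (Finset.univ.filter (fun i => x i = 0)).card := by
        simp [Finset.sum_ite]
      rw [this]
      have hz : n - κ ≤ (Finset.univ.filter (fun i => x i = 0)).card := by omega
      calc (n:ℝ) - κ ≤ ((n - κ : ℕ) : ℝ) := by
            push_cast [hκ]; ring_nf; simp
        _ ≤ _ := by exact_mod_cast hz
  · rintro ⟨y, hy01, hxy, hsum⟩
    have hbound : ∑ i, y i ≤ ((Finset.univ.filter (fun i => x i = 0)).card : ℝ) := by
      calc ∑ i, y i ≤ ∑ i, (if x i = 0 then (1:ℝ) else 0) := by
            apply Finset.sum_le_sum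
            intro i _
            by_cases hx : x i = 0
            · simp [hx, (hy01 i).2]
            · have := hxy i
              have : y i = 0 := by
                rcases mul_eq_zero.mp this with h | h
                · exact absurd h hx
                · exact h
              simp [hx, this]
        _ = _ := by simp [Finset.sum_ite]
    have : (n:ℝ) - κ ≤ ((Finset.univ.filter (fun i => x i = 0)).card : ℝ) :=
      le_trans hsum hbound
    have h2 : (n:ℕ) ≤ (Finset.univ.filter (fun i => x i = 0)).card + κ := by
      have := sub_le_iff_le_add.mp this
      exact_mod_cast this
    omega
end

section
/- Let f, g₁,…,gₘ : ℝⁿ → ℝ be convex differentiable functions and h : ℝⁿ → ℝᵖ be affine. Suppose (x*, y*) is an S-stationary point of the problem minimize f(x) subject to g(x) ≤ 0, h(x) = 0, 0 ≤ y ≤ e, x∘y = 0, eᵀy ≥ n − κ; i.e., there exist λ ∈ ℝᵐ with λ ≥ 0, μ ∈ ℝᵖ, γ ∈ ℝⁿ such that ∇f(x*) + ∑ᵢ λᵢ∇gᵢ(x*) + ∑ᵢ μᵢ∇hᵢ(x*) + γ = 0, λᵢ·gᵢ(x*) = 0 for all i, and γᵢ = 0 for all i with y*ᵢ = 0. Then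 (x*, y*) is a local minimizer of this problem. -/
lemma grad_ineq_aux {n : ℕ} {f : (Fin n → ℝ) → ℝ} (hf : ConvexOn ℝ Set.univ f)
    (hfd : Differentiable ℝ f) (a x : Fin n → ℝ) :
    fderiv ℝ f a (x - a) ≤ f x - f a := by
  set d : Fin n → ℝ := x - a with hd
  set φ : ℝ → ℝ := fun t => f (a + t • d) with hφ
  have hline : ∀ t : ℝ, (AffineMap.lineMap a x : ℝ →ᵃ[ℝ] (Fin n → ℝ)) t = a + t • d := by
    intro t
    simp [AffineMap.lineMap_apply, hd]
    abel
  have hconv : ConvexOn ℝ Set.univ φ := by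
    have := hf.comp_affineMap (AffineMap.lineMap a x : ℝ →ᵃ[ℝ] (Fin n → ℝ))
    have hpre : (AffineMap.lineMap a x : ℝ →ᵃ[ℝ] (Fin n → ℝ)) ⁻¹' Set.univ = Set.univ := by simp
    rw [hpre] at this
    have heq : φ = f ∘ (AffineMap.lineMap a x : ℝ →ᵃ[ℝ] (Fin n → ℝ)) := by
      funext t
      simp [hφ, Function.comp, hline t]
    rw [heq]; exact this
  have hderiv : HasDerivAt φ (fderiv ℝ f a d) 0 := by
    have h1 : HasDerivAt (fun t : ℝ => a + t • d) d 0 := by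
      simpa using ((hasDerivAt_id (0:ℝ)).smul_const d).const_add a
    have h2 : HasFDerivAt f (fderiv ℝ f a) ((fun t : ℝ => a + t • d) 0) := by
      simpa using (hfd a).hasFDerivAt
    exact h2.comp_hasDerivAt 0 h1
  have := hconv.le_slope_of_hasDerivAt (Set.mem_univ 0) (Set.mem_univ 1) zero_lt_one hderiv
  have hs : slope φ 0 1 = f x - f a := by
    simp [slope, hφ, hd]
  linarith [this, hs.ge, hs.le]

/-- In the convex case, S-stationary points of the continuous reformulation of the
cardinality-constrained problem are local minimizers. -/
theorem s_stationary_implies_local_min_convex (n m p κ : ℕ)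
    (f : (Fin n → ℝ) → ℝ) (g : Fin m → (Fin n → ℝ) → ℝ)
    (A : Fin p → (Fin n → ℝ) →ₗ[ℝ] ℝ) (b : Fin p → ℝ)
    (hf : ConvexOn ℝ Set.univ f) (hfd : Differentiable ℝ f)
    (hg : ∀ i, ConvexOn ℝ Set.univ (g i)) (hgd : ∀ i, Differentiable ℝ (g i))
    -- the affine equality constraints h i x = A i x + b i
    (h : Fin p → (Fin n → ℝ) → ℝ) (hA : ∀ i x, h i x = A i x + b i)
    (xs ys : Fin n → ℝ)
    -- feasibility of (x*, y*)
    (hgfeas : ∀ i, g i xs ≤ 0) (hhfeas : ∀ i, h i xs = 0)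
    (hy01 : ∀ i, 0 ≤ ys i ∧ ys i ≤ 1) (hcomp : ∀ i, xs i * ys i = 0)
    (hsum : (n : ℝ) - κ ≤ ∑ i, ys i)
    -- S-stationarity
    (lam : Fin m → ℝ) (mu : Fin p → ℝ) (gam : Fin n → ℝ)
    (hlam : ∀ i, 0 ≤ lam i)
    (hstat : ∀ v : Fin n → ℝ,
      fderiv ℝ f xs v + ∑ i, lam i * fderiv ℝ (g i) xs v
        + ∑ i, mu i * A i v + ∑ i, gam i * v i = 0)
    (hcs : ∀ i, lam i * g i xs = 0)
    (hgam : ∀ i, ys i = 0 → gam i = 0) :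
    -- conclusion: (x*, y*) is a local minimizer of the reformulated problem
    ∃ ε > 0, ∀ x y : Fin n → ℝ,
      (∀ i, g i x ≤ 0) → (∀ i, h i x = 0) →
      (∀ i, 0 ≤ y i ∧ y i ≤ 1) → (∀ i, x i * y i = 0) →
      ((n : ℝ) - κ ≤ ∑ i, y i) →
      ‖x - xs‖ < ε → ‖y - ys‖ < ε →
      f xs ≤ f x := by
  classical
  set S : Finset (Fin n) := Finset.univ.filter (fun i => 0 < ys i) with hS
  set T : Finset ℝ := insert (1 : ℝ) (S.image ys) with hT
  have hTne : T.Nonempty := ⟨1, by simp [hT]⟩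
  refine ⟨T.min' hTne, ?_, ?_⟩
  · -- positivity of ε
    have hmem : T.min' hTne ∈ T := T.min'_mem hTne
    have hmem' : T.min' hTne ∈ insert (1:ℝ) (S.image ys) := hmem
    rcases Finset.mem_insert.mp hmem' with h1 | h2
    · rw [h1]; exact one_pos
    · rcases Finset.mem_image.mp h2 with ⟨i, hi, hyi⟩
      rw [← hyi]
      exact (Finset.mem_filter.mp hi).2
  · intro x y hgx hhx hy01' hcompxy hsum' hxnear hynear
    -- the γ-term vanishes
    have hgamterm : ∀ i, gam i * (x - xs) i = 0 := by
      intro i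
      rcases eq_or_lt_of_le (hy01 i).1 with h0 | hpos
      · rw [hgam i h0.symm]; ring
      · -- ys i > 0, so ε ≤ ys i, so y i > 0, so x i = 0; also xs i = 0
        have hxs0 : xs i = 0 := by
          have := hcomp i
          rcases mul_eq_zero.mp this with h' | h'
          · exact h'
          · exact absurd h' (ne_of_gt hpos)
        have hεle : T.min' hTne ≤ ys i := by
          apply Finset.min'_le
          show ys i ∈ insert (1:ℝ) (S.image ys)
          exact Finset.mem_insert_of_mem (Finset.mem_image.mpr
            ⟨i, Finset.mem_filter.mpr ⟨Finset.mem_univ i, hpos⟩, rfl⟩)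
        have hclose : |y i - ys i| < ys i := by
          have h1 : ‖(y - ys) i‖ ≤ ‖y - ys‖ := norm_le_pi_norm (y - ys) i
          have h2 : (y - ys) i = y i - ys i := rfl
          rw [h2] at h1
          calc |y i - ys i| ≤ ‖y - ys‖ := h1
            _ < T.min' hTne := hynear
            _ ≤ ys i := hεle
        have hy_pos : 0 < y i := by
          have := abs_lt.mp hclose
          linarith [this.1]
        have hx0 : x i = 0 := by
          rcases mul_eq_zero.mp (hcompxy i) with h' | h'
          · exact h'
          · exact absurd h' (ne_of_gt hy_pos)
        have : (x - xs) i = 0 := by simp [hx0, hxs0]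
        rw [this]; ring
    have hgamsum : ∑ i, gam i * (x - xs) i = 0 :=
      Finset.sum_eq_zero fun i _ => hgamterm i
    -- the μ-term vanishes
    have hmusum : ∑ i, mu i * A i (x - xs) = 0 := by
      apply Finset.sum_eq_zero
      intro i _
      have : A i (x - xs) = 0 := by
        have h1 : A i x = -b i := by
          have := hA i x; rw [hhx i] at this; linarith
        have h2 : A i xs = -b i := by
          have := hA i xs; rw [hhfeas i] at this; linarith
        rw [map_sub, h1, h2]; ring
      rw [this]; ring
    -- the λ-term is nonpositive
    have hlamsum : ∑ i, lam i * fderiv ℝ (g i) xs (x - xs) ≤ 0 := by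
      apply Finset.sum_nonpos
      intro i _
      have hgi : fderiv ℝ (g i) xs (x - xs) ≤ g i x - g i xs :=
        grad_ineq_aux (hg i) (hgd i) xs x
      have h1 : lam i * fderiv ℝ (g i) xs (x - xs) ≤ lam i * (g i x - g i xs) :=
        mul_le_mul_of_nonneg_left hgi (hlam i)
      have h2 : lam i * (g i x - g i xs) = lam i * g i x - lam i * g i xs := by ring
      have h3 : lam i * g i x ≤ 0 := mul_nonpos_of_nonneg_of_nonpos (hlam i) (hgx i)
      rw [h2, hcs i] at h1
      linarith
    have hmain := hstat (x - xs)
    have hfgrad : fderiv ℝ f xs (x - xs) ≤ f x - f xs := grad_ineq_aux hf hfd xs x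
    rw [hgamsum, hmusum] at hmain
    linarith
end

section
/- Let (x*, y*) be feasible for the continuous reformulation (g(x) ≤ 0, h(x) = 0, 0 ≤ y ≤ e, x∘y = 0, eᵀy ≥ n − κ), and suppose tᵏ ↓ 0 with tᵏ > 0 and (xᵏ, yᵏ) → (x*, y*) is a sequence of KKT points of the Scholtes-regularized problems NLP(tᵏ). If CC-MFCQ holds at (x*, y*), then (x*, y*) is S-stationary; that is, there exist λ ≥ 0, μ, γ with ∇f(x*) + ∑ᵢ λᵢ∇gᵢ(x*) + ∑ᵢ μᵢ∇hᵢ(x*) + γ = 0, λᵢgᵢ(x*) = 0, and γᵢ = 0 whenever y*ᵢ = 0. -/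
open Filter Topology

/-- Per-iterate bound: for indices with `yk i < 1`, the effective multiplier
`gamt i * yk i` satisfies `|gamt i * yk i| * t ≤ δ * (yk i)^2`. -/
private lemma scholtes_keyA {n : ℕ} (t δ : ℝ) (xk yk gamt nu : Fin n → ℝ)
    (ht : 0 < t) (hδ : 0 ≤ δ)
    (hstaty : ∀ i, -δ + nu i + gamt i * xk i = 0)
    (hgamt : ∀ i, (xk i * yk i = t → 0 ≤ gamt i) ∧ (xk i * yk i = -t → gamt i ≤ 0) ∧
      (xk i * yk i ≠ t ∧ xk i * yk i ≠ -t → gamt i = 0))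
    (hnu : ∀ i, (yk i = 0 → nu i ≤ 0) ∧ (yk i = 1 → 0 ≤ nu i) ∧
      (yk i ≠ 0 ∧ yk i ≠ 1 → nu i = 0))
    (hy0 : ∀ i, 0 ≤ yk i) :
    ∀ i, yk i < 1 → |gamt i * yk i| * t ≤ δ * (yk i) ^ 2 := by
  intro i hlt
  by_cases h0 : yk i = 0
  · simp [h0]
  · have hne1 : yk i ≠ 1 := ne_of_lt hlt
    have hν : nu i = 0 := (hnu i).2.2 ⟨h0, hne1⟩
    have hgx : gamt i * xk i = δ := by have := hstaty i; rw [hν] at this; linarith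
    by_cases h1 : xk i * yk i = t
    · have hg : 0 ≤ gamt i := (hgamt i).1 h1
      rw [abs_of_nonneg (mul_nonneg hg (hy0 i))]
      have : gamt i * yk i * t = δ * yk i ^ 2 := by
        linear_combination (yk i) ^ 2 * hgx - gamt i * yk i * h1
      linarith
    · by_cases h2 : xk i * yk i = -t
      · have hg : gamt i ≤ 0 := (hgamt i).2.1 h2
        rw [abs_of_nonpos (mul_nonpos_of_nonpos_of_nonneg hg (hy0 i))]
        have : -(gamt i * yk i) * t = δ * yk i ^ 2 := by
          linear_combination (yk i) ^ 2 * hgx - gamt i * yk i * h2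
        linarith
      · have hg0 : gamt i = 0 := (hgamt i).2.2 ⟨h1, h2⟩
        rw [hg0, zero_mul, abs_zero, zero_mul]
        exact mul_nonneg hδ (sq_nonneg _)

/-- Per-iterate bound for the multiplier `δ` of the cardinality constraint. -/
private lemma scholtes_keyB {n κ : ℕ} (t δ : ℝ) (xk yk gamt nu ys : Fin n → ℝ)
    (ht : 0 < t) (hδ : 0 ≤ δ)
    (hstaty : ∀ i, -δ + nu i + gamt i * xk i = 0)
    (hgamt : ∀ i, (xk i * yk i = t → 0 ≤ gamt i) ∧ (xk i * yk i = -t → gamt i ≤ 0) ∧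
      (xk i * yk i ≠ t ∧ xk i * yk i ≠ -t → gamt i = 0))
    (hnu : ∀ i, (yk i = 0 → nu i ≤ 0) ∧ (yk i = 1 → 0 ≤ nu i) ∧
      (yk i ≠ 0 ∧ yk i ≠ 1 → nu i = 0))
    (hy01 : ∀ i, 0 ≤ yk i ∧ yk i ≤ 1)
    (hdelta2 : (∑ i, yk i) ≠ (n : ℝ) - κ → δ = 0)
    (hys0 : ∀ i, 0 ≤ ys i) (hys1 : ∀ i, ys i ≤ 1)
    (hclose : ∀ j, ys j ≠ 0 → ys j / 2 < yk j)
    (hsumys : (n : ℝ) - κ ≤ ∑ i, ys i)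
    (hZ : ∃ i, ys i = 0) :
    δ = 0 ∨ ∃ j, ys j ≠ 0 ∧ yk j < 1 ∧ δ * (yk j) ^ 2 ≤ t * |gamt j * yk j| := by
  by_cases hδ0 : δ = 0
  · exact Or.inl hδ0
  right
  have hδpos : 0 < δ := lt_of_le_of_ne hδ (Ne.symm hδ0)
  have hsumeq : ∑ i, yk i = (n : ℝ) - κ := by
    by_contra hc; exact hδ0 (hdelta2 hc)
  have hposall : ∀ i, 0 < yk i := by
    intro i
    rcases lt_or_eq_of_le (hy01 i).1 with hlt | heq
    · exact hlt
    · exfalso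
      have hy0 : yk i = 0 := heq.symm
      have hg0 : gamt i = 0 := by
        refine (hgamt i).2.2 ⟨?_, ?_⟩ <;> rw [hy0, mul_zero]
        · exact ne_of_lt ht
        · intro hcon
          linarith
      have hst := hstaty i
      have hν : nu i = δ := by rw [hg0, zero_mul] at hst; linarith
      have := (hnu i).1 hy0
      linarith
  have hexj : ∃ j, ys j ≠ 0 ∧ yk j < 1 := by
    by_contra hc
    push_neg at hc
    have hle : ∀ i ∈ Finset.univ, ys i ≤ yk i := by
      intro i _
      by_cases hysi : ys i = 0
      · rw [hysi]; exact (hy01 i).1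
      · have h1 : yk i = 1 := le_antisymm (hy01 i).2 (hc i hysi)
        rw [h1]; exact hys1 i
    have hsle : ∑ i, ys i ≤ ∑ i, yk i := Finset.sum_le_sum hle
    have heq : ∑ i, ys i = ∑ i, yk i := le_antisymm hsle (by rw [hsumeq]; exact hsumys)
    have hall := (Finset.sum_eq_sum_iff_of_le hle).mp heq
    obtain ⟨i0, hi0⟩ := hZ
    have h1 := hall i0 (Finset.mem_univ i0)
    have h2 := hposall i0
    rw [hi0] at h1
    linarith [h1.symm ▸ h2]
  obtain ⟨j, hjne, hjlt⟩ := hexj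
  refine ⟨j, hjne, hjlt, ?_⟩
  have hjpos : 0 < yk j := hposall j
  have hν : nu j = 0 := (hnu j).2.2 ⟨hjpos.ne', ne_of_lt hjlt⟩
  have hgx : gamt j * xk j = δ := by have := hstaty j; rw [hν] at this; linarith
  have hgne : gamt j ≠ 0 := by
    intro h0; rw [h0, zero_mul] at hgx; exact hδ0 hgx.symm
  by_cases h1 : xk j * yk j = t
  · have hg : 0 ≤ gamt j := (hgamt j).1 h1
    rw [abs_of_nonneg (mul_nonneg hg (hy01 j).1)]
    have : gamt j * yk j * t = δ * yk j ^ 2 := by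
      linear_combination (yk j) ^ 2 * hgx - gamt j * yk j * h1
    linarith
  · by_cases h2 : xk j * yk j = -t
    · have hg : gamt j ≤ 0 := (hgamt j).2.1 h2
      rw [abs_of_nonpos (mul_nonpos_of_nonpos_of_nonneg hg (hy01 j).1)]
      have : -(gamt j * yk j) * t = δ * yk j ^ 2 := by
        linear_combination (yk j) ^ 2 * hgx - gamt j * yk j * h2
      linarith
    · exact absurd ((hgamt j).2.2 ⟨h1, h2⟩) hgne

set_option maxHeartbeats 1000000 in
/-- Convergence of the Scholtes-type regularization method: limits of KKT points of the
regularized problems NLP(tᵏ) are S-stationary under CC-MFCQ (Theorem 3.1). -/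
theorem scholtes_regularization_converges_to_S_stationary (n m p κ : ℕ)
    (f : (Fin n → ℝ) → ℝ) (g : Fin m → (Fin n → ℝ) → ℝ) (h : Fin p → (Fin n → ℝ) → ℝ)
    (hfd : ContDiff ℝ 1 f) (hgd : ∀ i, ContDiff ℝ 1 (g i)) (hhd : ∀ i, ContDiff ℝ 1 (h i))
    (t : ℕ → ℝ) (ht : ∀ k, 0 < t k) (ht0 : Filter.Tendsto t Filter.atTop (nhds 0))
    (x y : ℕ → Fin n → ℝ) (xs ys : Fin n → ℝ)
    (hconv : Filter.Tendsto (fun k => (x k, y k)) Filter.atTop (nhds (xs, ys)))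
    -- feasibility of (xᵏ, yᵏ) for NLP(tᵏ)
    (hgf : ∀ k i, g i (x k) ≤ 0) (hhf : ∀ k i, h i (x k) = 0)
    (hy01 : ∀ k i, 0 ≤ y k i ∧ y k i ≤ 1)
    (hxyt : ∀ k i, |x k i * y k i| ≤ t k)
    (hsum : ∀ k, (n : ℝ) - κ ≤ ∑ i, y k i)
    -- KKT multipliers of NLP(tᵏ) at (xᵏ, yᵏ)
    (lam : ℕ → Fin m → ℝ) (mu : ℕ → Fin p → ℝ) (gamt : ℕ → Fin n → ℝ)
    (delta : ℕ → ℝ) (nu : ℕ → Fin n → ℝ)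
    (hstatx : ∀ k (v : Fin n → ℝ),
      fderiv ℝ f (x k) v + ∑ i, lam k i * fderiv ℝ (g i) (x k) v
        + ∑ i, mu k i * fderiv ℝ (h i) (x k) v + ∑ i, gamt k i * y k i * v i = 0)
    (hstaty : ∀ k i, -delta k + nu k i + gamt k i * x k i = 0)
    (hlam : ∀ k i, 0 ≤ lam k i ∧ lam k i * g i (x k) = 0)
    (hdelta : ∀ k, 0 ≤ delta k ∧ ((∑ i, y k i) ≠ (n : ℝ) - κ → delta k = 0))
    (hgamt : ∀ k i,
      (x k i * y k i = t k → 0 ≤ gamt k i) ∧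
      (x k i * y k i = -t k → gamt k i ≤ 0) ∧
      (x k i * y k i ≠ t k ∧ x k i * y k i ≠ -t k → gamt k i = 0))
    (hnu : ∀ k i,
      (y k i = 0 → nu k i ≤ 0) ∧ (y k i = 1 → 0 ≤ nu k i) ∧
      (y k i ≠ 0 ∧ y k i ≠ 1 → nu k i = 0))
    -- CC-MFCQ at (x*, y*)
    (hmfcq : ∀ (lam' : Fin m → ℝ) (mu' : Fin p → ℝ) (gam' : Fin n → ℝ),
      (∀ i, 0 ≤ lam' i) → (∀ i, g i xs ≠ 0 → lam' i = 0) →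
      (∀ i, xs i ≠ 0 → gam' i = 0) →
      (∀ v : Fin n → ℝ,
        ∑ i, lam' i * fderiv ℝ (g i) xs v + ∑ i, mu' i * fderiv ℝ (h i) xs v
          + ∑ i, gam' i * v i = 0) →
      lam' = 0 ∧ mu' = 0 ∧ gam' = 0) :
    -- conclusion: (x*, y*) is S-stationary
    ∃ (lams : Fin m → ℝ) (mus : Fin p → ℝ) (gams : Fin n → ℝ),
      (∀ i, 0 ≤ lams i) ∧ (∀ i, lams i * g i xs = 0) ∧
      (∀ i, ys i = 0 → gams i = 0) ∧
      (∀ v : Fin n → ℝ,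
        fderiv ℝ f xs v + ∑ i, lams i * fderiv ℝ (g i) xs v
          + ∑ i, mus i * fderiv ℝ (h i) xs v + ∑ i, gams i * v i = 0) := by
  classical
  -- coordinate limits
  have hx : Tendsto x atTop (𝓝 xs) := (continuous_fst.tendsto (xs, ys)).comp hconv
  have hy : Tendsto y atTop (𝓝 ys) := (continuous_snd.tendsto (xs, ys)).comp hconv
  have hxi : ∀ i, Tendsto (fun k => x k i) atTop (𝓝 (xs i)) :=
    fun i => ((continuous_apply i).tendsto xs).comp hx
  have hyi : ∀ i, Tendsto (fun k => y k i) atTop (𝓝 (ys i)) :=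
    fun i => ((continuous_apply i).tendsto ys).comp hy
  have hys0 : ∀ i, 0 ≤ ys i := fun i => ge_of_tendsto' (hyi i) (fun k => (hy01 k i).1)
  have hys1 : ∀ i, ys i ≤ 1 := fun i => le_of_tendsto' (hyi i) (fun k => (hy01 k i).2)
  have hxys : ∀ i, xs i * ys i = 0 := by
    intro i
    refine tendsto_nhds_unique ((hxi i).mul (hyi i)) ?_
    refine tendsto_of_tendsto_of_tendsto_of_le_of_le (by simpa using ht0.neg) ht0
      (fun k => (abs_le.mp (hxyt k i)).1) (fun k => (abs_le.mp (hxyt k i)).2)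
  -- normalization
  set N : ℕ → ℝ := fun k =>
    1 + ∑ i, |lam k i| + ∑ i, |mu k i| + ∑ i, |gamt k i * y k i| with hN
  have hS1 : ∀ k, 0 ≤ ∑ i, |lam k i| := fun k => Finset.sum_nonneg fun i _ => abs_nonneg _
  have hS2 : ∀ k, 0 ≤ ∑ i, |mu k i| := fun k => Finset.sum_nonneg fun i _ => abs_nonneg _
  have hS3 : ∀ k, 0 ≤ ∑ i, |gamt k i * y k i| :=
    fun k => Finset.sum_nonneg fun i _ => abs_nonneg _
  have hNpos : ∀ k, 0 < N k := by
    intro k; have := hS1 k; have := hS2 k; have := hS3 k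
    simp only [hN]; linarith
  set s : ℕ → ℝ := fun k => (N k)⁻¹ with hsdef
  have hspos : ∀ k, 0 < s k := fun k => inv_pos.mpr (hNpos k)
  have hsN : ∀ k, s k * N k = 1 := fun k => inv_mul_cancel₀ (hNpos k).ne'
  have hcomp : ∀ k (a : ℝ), |a| ≤ N k → |s k * a| ≤ 1 := by
    intro k a ha
    rw [abs_mul, abs_of_pos (hspos k)]
    calc s k * |a| ≤ s k * N k := mul_le_mul_of_nonneg_left ha (hspos k).le
      _ = 1 := hsN k
  have hlamN : ∀ k i, |lam k i| ≤ N k := by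
    intro k i
    have h1 : |lam k i| ≤ ∑ j, |lam k j| :=
      Finset.single_le_sum (f := fun j => |lam k j|) (fun j _ => abs_nonneg _) (Finset.mem_univ i)
    have := hS2 k; have := hS3 k
    simp only [hN]; linarith
  have hmuN : ∀ k i, |mu k i| ≤ N k := by
    intro k i
    have h1 : |mu k i| ≤ ∑ j, |mu k j| :=
      Finset.single_le_sum (f := fun j => |mu k j|) (fun j _ => abs_nonneg _) (Finset.mem_univ i)
    have := hS1 k; have := hS3 k
    simp only [hN]; linarith
  have hgamN : ∀ k i, |gamt k i * y k i| ≤ N k := by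
    intro k i
    have h1 : |gamt k i * y k i| ≤ ∑ j, |gamt k j * y k j| :=
      Finset.single_le_sum (f := fun j => |gamt k j * y k j|) (fun j _ => abs_nonneg _) (Finset.mem_univ i)
    have := hS1 k; have := hS2 k
    simp only [hN]; linarith
  -- the bounded sequence of scaled multipliers
  set U : ℕ → ℝ × (Fin m → ℝ) × (Fin p → ℝ) × (Fin n → ℝ) :=
    fun k => (s k, fun i => s k * lam k i, fun i => s k * mu k i,
      fun i => s k * (gamt k i * y k i)) with hU
  have hUb : ∀ k, U k ∈ Metric.closedBall
      (0 : ℝ × (Fin m → ℝ) × (Fin p → ℝ) × (Fin n → ℝ)) 1 := by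
    intro k
    rw [mem_closedBall_zero_iff]
    have h1 : |s k| ≤ 1 := by
      have := hcomp k 1 (by simp only [abs_one, hN]; linarith [hS1 k, hS2 k, hS3 k])
      simpa using this
    refine max_le ?_ (max_le ?_ (max_le ?_ ?_))
    · simpa [Real.norm_eq_abs] using h1
    · rw [pi_norm_le_iff_of_nonneg zero_le_one]
      intro i; rw [Real.norm_eq_abs]; exact hcomp k _ (hlamN k i)
    · rw [pi_norm_le_iff_of_nonneg zero_le_one]
      intro i; rw [Real.norm_eq_abs]; exact hcomp k _ (hmuN k i)
    · rw [pi_norm_le_iff_of_nonneg zero_le_one]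
      intro i; rw [Real.norm_eq_abs]; exact hcomp k _ (hgamN k i)
  obtain ⟨L, _, φ, hφ, hUc⟩ := (isCompact_closedBall _ _).tendsto_subseq hUb
  obtain ⟨sL, lam', mu', gam'⟩ := L
  have hφt : Tendsto φ atTop atTop := hφ.tendsto_atTop
  -- component limits
  have hsc : Tendsto (fun k => s (φ k)) atTop (𝓝 sL) :=
    (continuous_fst.tendsto _).comp hUc
  have hlci : ∀ i, Tendsto (fun k => s (φ k) * lam (φ k) i) atTop (𝓝 (lam' i)) :=
    fun i => ((continuous_apply i).tendsto _).comp
      (((continuous_fst.comp continuous_snd).tendsto _).comp hUc)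
  have hmci : ∀ i, Tendsto (fun k => s (φ k) * mu (φ k) i) atTop (𝓝 (mu' i)) :=
    fun i => ((continuous_apply i).tendsto _).comp
      (((continuous_fst.comp (continuous_snd.comp continuous_snd)).tendsto _).comp hUc)
  have hgci : ∀ i, Tendsto (fun k => s (φ k) * (gamt (φ k) i * y (φ k) i)) atTop
      (𝓝 (gam' i)) :=
    fun i => ((continuous_apply i).tendsto _).comp
      (((continuous_snd.comp (continuous_snd.comp continuous_snd)).tendsto _).comp hUc)
  -- sign and support facts for the limit multipliers
  have hlam'0 : ∀ i, 0 ≤ lam' i :=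
    fun i => ge_of_tendsto' (hlci i) (fun k => mul_nonneg (hspos _).le (hlam _ i).1)
  have hsL0 : 0 ≤ sL := ge_of_tendsto' hsc (fun k => (hspos _).le)
  have hlamg : ∀ i, g i xs ≠ 0 → lam' i = 0 := by
    intro i hgne
    have hgt : Tendsto (fun k => g i (x k)) atTop (𝓝 (g i xs)) :=
      ((hgd i).continuous.tendsto xs).comp hx
    have hev : ∀ᶠ k in atTop, lam k i = 0 := by
      filter_upwards [hgt.eventually_ne hgne] with k hk
      rcases mul_eq_zero.mp (hlam k i).2 with h0 | h0
      · exact h0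
      · exact absurd h0 hk
    have hz : Tendsto (fun k => s (φ k) * lam (φ k) i) atTop (𝓝 0) := by
      refine tendsto_const_nhds.congr' ?_
      filter_upwards [hφt.eventually hev] with k hk
      rw [hk, mul_zero]
    exact tendsto_nhds_unique (hlci i) hz
  have hsys : (n : ℝ) - κ ≤ ∑ i, ys i :=
    ge_of_tendsto' (tendsto_finset_sum _ fun i _ => hyi i) hsum
  -- constant controlling δᵏ
  set C : ℝ := ∑ j, (if ys j = 0 then (0:ℝ) else (2 / ys j) ^ 2) with hC
  have hC0 : 0 ≤ C :=
    Finset.sum_nonneg fun j _ => by split <;> positivity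
  -- eventual closeness facts
  have hE : ∀ᶠ k in atTop, ∀ i : Fin n,
      (ys i = 0 → y k i < 1) ∧ (ys i ≠ 0 → ys i / 2 < y k i) := by
    rw [eventually_all]
    intro i
    refine Filter.Eventually.and ?_ ?_
    · by_cases hysi : ys i = 0
      · have h1 : ys i < 1 := by rw [hysi]; norm_num
        filter_upwards [Tendsto.eventually_lt_const h1 (hyi i)] with k hk
        exact fun _ => hk
      · exact Filter.Eventually.of_forall fun k hcon => absurd hcon hysi
    · by_cases hysi : ys i = 0
      · exact Filter.Eventually.of_forall fun k hcon => absurd hysi hcon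
      · have hpos : 0 < ys i := lt_of_le_of_ne (hys0 i) (Ne.symm hysi)
        filter_upwards [Tendsto.eventually_const_lt (half_lt_self hpos) (hyi i)] with k hk
        exact fun _ => hk
  -- the key eventual bound on scaled effective multipliers
  have hKB : ∀ᶠ k in atTop, ∀ i, ys i = 0 →
      |s k * (gamt k i * y k i)| ≤ C * (y k i) ^ 2 := by
    filter_upwards [hE] with k hk
    intro i hysi
    have hA := scholtes_keyA (t k) (delta k) (x k) (y k) (gamt k) (nu k) (ht k)
      (hdelta k).1 (hstaty k) (hgamt k) (hnu k) (fun j => (hy01 k j).1) i ((hk i).1 hysi)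
    have hB := scholtes_keyB (κ := κ) (t k) (delta k) (x k) (y k) (gamt k) (nu k) ys (ht k)
      (hdelta k).1 (hstaty k) (hgamt k) (hnu k) (hy01 k) (hdelta k).2 hys0 hys1
      (fun j hj => (hk j).2 hj) hsys ⟨i, hysi⟩
    rw [abs_mul, abs_of_pos (hspos k)]
    rcases hB with hB | ⟨j, hjne, hjlt, hB⟩
    · rw [hB] at hA
      have h0 : |gamt k i * y k i| = 0 := by
        have := abs_nonneg (gamt k i * y k i)
        nlinarith [ht k]
      rw [h0, mul_zero]
      positivity
    · have hyj : ys j / 2 < y k j := (hk j).2 hjne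
      have hyspos : 0 < ys j := lt_of_le_of_ne (hys0 j) (Ne.symm hjne)
      have hyjpos : 0 < y k j := by linarith
      have hsγj : s k * |gamt k j * y k j| ≤ 1 := by
        have := hcomp k (gamt k j * y k j) (hgamN k j)
        rwa [abs_mul, abs_of_pos (hspos k)] at this
      have hCj : (2 / ys j) ^ 2 ≤ C := by
        have hle := Finset.single_le_sum
          (f := fun j' => if ys j' = 0 then (0:ℝ) else (2 / ys j') ^ 2)
          (fun j' _ => by split <;> positivity) (Finset.mem_univ j)
        rw [hC]
        simpa [hjne] using hle
      -- chain of inequalities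
      have h1 : s k * delta k * (y k j) ^ 2 ≤ t k := by
        have h1a := mul_le_mul_of_nonneg_left hB (hspos k).le
        have h1b : t k * (s k * |gamt k j * y k j|) ≤ t k * 1 :=
          mul_le_mul_of_nonneg_left hsγj (ht k).le
        nlinarith
      have h2 : s k * |gamt k i * y k i| * (y k j) ^ 2 ≤ (y k i) ^ 2 := by
        have h2a := mul_le_mul_of_nonneg_left hA (hspos k).le
        have hA2 := mul_le_mul_of_nonneg_right h2a (sq_nonneg (y k j))
        have hB2 := mul_le_mul_of_nonneg_left h1 (sq_nonneg (y k i))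
        nlinarith [ht k]
      have h3 : s k * |gamt k i * y k i| * (ys j / 2) ^ 2 ≤ (y k i) ^ 2 := by
        have hsq : (ys j / 2) ^ 2 ≤ (y k j) ^ 2 :=
          pow_le_pow_left₀ (by positivity) hyj.le 2
        have hnn : 0 ≤ s k * |gamt k i * y k i| :=
          mul_nonneg (hspos k).le (abs_nonneg _)
        exact le_trans (mul_le_mul_of_nonneg_left hsq hnn) h2
      have hq : (0:ℝ) < (ys j / 2) ^ 2 := by positivity
      calc s k * |gamt k i * y k i| ≤ (y k i) ^ 2 / (ys j / 2) ^ 2 :=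
            (le_div_iff₀ hq).mpr h3
        _ = (y k i) ^ 2 * (2 / ys j) ^ 2 := by
            field_simp
        _ ≤ (y k i) ^ 2 * C := mul_le_mul_of_nonneg_left hCj (sq_nonneg _)
        _ = C * (y k i) ^ 2 := mul_comm _ _
  -- gam' vanishes where ys vanishes
  have hgamZ : ∀ i, ys i = 0 → gam' i = 0 := by
    intro i hysi
    refine tendsto_nhds_unique (hgci i) ?_
    have hyφ : Tendsto (fun k => y (φ k) i) atTop (𝓝 (ys i)) := (hyi i).comp hφt
    have hlim : Tendsto (fun k => C * (y (φ k) i) ^ 2) atTop (𝓝 0) := by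
      have h2 : Tendsto (fun k => C * (y (φ k) i) ^ 2) atTop (𝓝 (C * (ys i) ^ 2)) :=
        tendsto_const_nhds.mul (hyφ.pow 2)
      rw [hysi] at h2
      simpa using h2
    refine tendsto_of_tendsto_of_tendsto_of_le_of_le' (by simpa using hlim.neg) hlim ?_ ?_
    · filter_upwards [hφt.eventually hKB] with k hk
      have := hk i hysi
      have h := neg_abs_le (s (φ k) * (gamt (φ k) i * y (φ k) i))
      linarith
    · filter_upwards [hφt.eventually hKB] with k hk
      exact le_trans (le_abs_self _) (hk i hysi)
  -- limit stationarity
  have hstatL : ∀ v : Fin n → ℝ,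
      sL * fderiv ℝ f xs v + ∑ i, lam' i * fderiv ℝ (g i) xs v
        + ∑ i, mu' i * fderiv ℝ (h i) xs v + ∑ i, gam' i * v i = 0 := by
    intro v
    have hev : ∀ (F : (Fin n → ℝ) → ℝ), ContDiff ℝ 1 F →
        Tendsto (fun k => (fderiv ℝ F (x (φ k))) v) atTop (𝓝 ((fderiv ℝ F xs) v)) := by
      intro F hF
      have hc : Continuous fun z => (fderiv ℝ F z) v :=
        (ContinuousLinearMap.apply ℝ ℝ v).continuous.comp (hF.continuous_fderiv one_ne_zero)
      exact (hc.tendsto xs).comp (hx.comp hφt)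
    have t1 : Tendsto (fun k => s (φ k) * fderiv ℝ f (x (φ k)) v) atTop
        (𝓝 (sL * fderiv ℝ f xs v)) := hsc.mul (hev f hfd)
    have t2 : Tendsto (fun k => ∑ i, s (φ k) * lam (φ k) i * fderiv ℝ (g i) (x (φ k)) v)
        atTop (𝓝 (∑ i, lam' i * fderiv ℝ (g i) xs v)) :=
      tendsto_finset_sum _ fun i _ => (hlci i).mul (hev (g i) (hgd i))
    have t3 : Tendsto (fun k => ∑ i, s (φ k) * mu (φ k) i * fderiv ℝ (h i) (x (φ k)) v)
        atTop (𝓝 (∑ i, mu' i * fderiv ℝ (h i) xs v)) :=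
      tendsto_finset_sum _ fun i _ => (hmci i).mul (hev (h i) (hhd i))
    have t4 : Tendsto (fun k => ∑ i, s (φ k) * (gamt (φ k) i * y (φ k) i) * v i)
        atTop (𝓝 (∑ i, gam' i * v i)) :=
      tendsto_finset_sum _ fun i _ => (hgci i).mul tendsto_const_nhds
    have tall := ((t1.add t2).add t3).add t4
    have hzero : ∀ k, s (φ k) * fderiv ℝ f (x (φ k)) v
        + ∑ i, s (φ k) * lam (φ k) i * fderiv ℝ (g i) (x (φ k)) v
        + ∑ i, s (φ k) * mu (φ k) i * fderiv ℝ (h i) (x (φ k)) v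
        + ∑ i, s (φ k) * (gamt (φ k) i * y (φ k) i) * v i = 0 := by
      intro k
      have hst := hstatx (φ k) v
      have h0 : s (φ k) * (fderiv ℝ f (x (φ k)) v
          + ∑ i, lam (φ k) i * fderiv ℝ (g i) (x (φ k)) v
          + ∑ i, mu (φ k) i * fderiv ℝ (h i) (x (φ k)) v
          + ∑ i, gamt (φ k) i * y (φ k) i * v i) = 0 := by rw [hst, mul_zero]
      rw [mul_add, mul_add, mul_add, Finset.mul_sum, Finset.mul_sum, Finset.mul_sum] at h0
      simp only [← mul_assoc] at h0
      simpa only [mul_assoc (s (φ k)) _ _] using h0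
    have hconst : Tendsto (fun _ : ℕ => (0:ℝ)) atTop
        (𝓝 (sL * fderiv ℝ f xs v + ∑ i, lam' i * fderiv ℝ (g i) xs v
          + ∑ i, mu' i * fderiv ℝ (h i) xs v + ∑ i, gam' i * v i)) :=
      tall.congr hzero
    exact tendsto_nhds_unique hconst tendsto_const_nhds
  -- normalization passes to the limit
  have hsum1 : sL + ∑ i, |lam' i| + ∑ i, |mu' i| + ∑ i, |gam' i| = 1 := by
    have tA : Tendsto (fun k => s (φ k) + ∑ i, |s (φ k) * lam (φ k) i|
        + ∑ i, |s (φ k) * mu (φ k) i| + ∑ i, |s (φ k) * (gamt (φ k) i * y (φ k) i)|)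
        atTop (𝓝 (sL + ∑ i, |lam' i| + ∑ i, |mu' i| + ∑ i, |gam' i|)) :=
      ((hsc.add (tendsto_finset_sum _ fun i _ => (hlci i).abs)).add
        (tendsto_finset_sum _ fun i _ => (hmci i).abs)).add
        (tendsto_finset_sum _ fun i _ => (hgci i).abs)
    have heq : ∀ k, s k + ∑ i, |s k * lam k i| + ∑ i, |s k * mu k i|
        + ∑ i, |s k * (gamt k i * y k i)| = 1 := by
      intro k
      have habs : ∀ a : ℝ, |s k * a| = s k * |a| := fun a => by
        rw [abs_mul, abs_of_pos (hspos k)]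
      simp only [habs]
      rw [← Finset.mul_sum, ← Finset.mul_sum, ← Finset.mul_sum, ← hsN k]
      simp only [hN]
      ring
    have : Tendsto (fun _ : ℕ => (1:ℝ)) atTop
        (𝓝 (sL + ∑ i, |lam' i| + ∑ i, |mu' i| + ∑ i, |gam' i|)) :=
      tA.congr fun k => heq (φ k)
    exact tendsto_nhds_unique this tendsto_const_nhds
  -- sL is positive (else CC-MFCQ forces all limits to vanish, contradicting hsum1)
  have hsLne : sL ≠ 0 := by
    intro h0
    have hsupp : ∀ i, xs i ≠ 0 → gam' i = 0 := by
      intro i hxi0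
      exact hgamZ i ((mul_eq_zero.mp (hxys i)).resolve_left hxi0)
    have heq0 : ∀ v : Fin n → ℝ,
        ∑ i, lam' i * fderiv ℝ (g i) xs v + ∑ i, mu' i * fderiv ℝ (h i) xs v
          + ∑ i, gam' i * v i = 0 := by
      intro v
      have := hstatL v
      rw [h0, zero_mul] at this
      linarith
    obtain ⟨hl0, hm0, hg0⟩ := hmfcq lam' mu' gam' hlam'0 hlamg hsupp heq0
    rw [h0, hl0, hm0, hg0] at hsum1
    simp at hsum1
  have hsLpos : 0 < sL := lt_of_le_of_ne hsL0 (Ne.symm hsLne)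
  -- the S-stationarity multipliers
  refine ⟨fun i => lam' i / sL, fun i => mu' i / sL, fun i => gam' i / sL,
    fun i => div_nonneg (hlam'0 i) hsLpos.le, ?_, ?_, ?_⟩
  · intro i
    show lam' i / sL * g i xs = 0
    by_cases hgz : g i xs = 0
    · rw [hgz, mul_zero]
    · rw [hlamg i hgz, zero_div, zero_mul]
  · intro i hysi
    show gam' i / sL = 0
    rw [hgamZ i hysi, zero_div]
  · intro v
    have hkey := hstatL v
    show fderiv ℝ f xs v + ∑ i, lam' i / sL * fderiv ℝ (g i) xs v
        + ∑ i, mu' i / sL * fderiv ℝ (h i) xs v + ∑ i, gam' i / sL * v i = 0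
    apply mul_left_cancel₀ hsLne
    rw [mul_zero, mul_add, mul_add, mul_add, Finset.mul_sum, Finset.mul_sum, Finset.mul_sum]
    have hterm : ∀ (a b : ℝ), sL * (a / sL * b) = a * b := fun a b => by
      field_simp
    simp only [hterm]
    exact hkey
end

section
/- For β ∈ (1/2, 1), the coefficients satisfy ζ_β ≤ η_β ≤ √(β/(1−β)) and (2β−1)/(2√(β(1−β))) ≤ √(β/(1−β)), where ζ_β = −Φ⁻¹(1−β) and η_β = −(∫_{−∞}^{Φ⁻¹(1−β)} t·φ(t) dt)/(1−β), with φ and Φ the standard normal density and cumulative distribution function. Consequently, for any portfolio x with covariance Q ⪰ 0 and mean μ, one has VaR_β(x) ≤ CVaR_β(x) ≤ RCVaR_β(x) and RVaR_β(x) ≤ RCVaR_β(x), where each risk measure equals c_β√(xᵀQx) − μᵀx with the corresponding coefficient c_β. -/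
open Real MeasureTheory Set Filter Topology

/-- Standard normal density. -/
noncomputable def normPdf (t : ℝ) : ℝ := Real.exp (-t ^ 2 / 2) / Real.sqrt (2 * Real.pi)

/-- Standard normal cumulative distribution function. -/
noncomputable def normCDF (x : ℝ) : ℝ := ∫ t in Set.Iic x, normPdf t

lemma normPdf_eq : normPdf = fun t => Real.exp (-(1/2) * t ^ 2) * (Real.sqrt (2 * Real.pi))⁻¹ := by
  funext t; rw [normPdf, div_eq_mul_inv]; ring_nf

lemma normPdf_pos (t : ℝ) : 0 < normPdf t := by rw [normPdf]; positivity

lemma normPdf_neg (t : ℝ) : normPdf (-t) = normPdf t := by rw [normPdf, normPdf, neg_pow]; ring_nf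

lemma integrable_normPdf : Integrable normPdf := by
  rw [normPdf_eq]
  exact (integrable_exp_neg_mul_sq (by norm_num)).mul_const _

lemma integrable_mul_normPdf : Integrable (fun t => t * normPdf t) := by
  simp_rw [normPdf_eq, ← mul_assoc]
  exact (integrable_mul_exp_neg_mul_sq (by norm_num)).mul_const _

lemma integrable_sq_mul_normPdf : Integrable (fun t => t ^ 2 * normPdf t) := by
  simp_rw [normPdf_eq, ← mul_assoc]
  have := integrable_rpow_mul_exp_neg_mul_sq (b := 1/2) (by norm_num) (s := 2) (by norm_num)
  simp_rw [Real.rpow_two] at this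
  exact this.mul_const _

lemma integral_normPdf : ∫ t, normPdf t = 1 := by
  rw [normPdf_eq, MeasureTheory.integral_mul_const, integral_gaussian,
    show (Real.pi / (1/2)) = 2 * Real.pi by ring, mul_inv_cancel₀ (by positivity)]

lemma hasDerivAt_normPdf (t : ℝ) : HasDerivAt normPdf (-(t * normPdf t)) t := by
  have h1 : HasDerivAt (fun t : ℝ => -t ^ 2 / 2) (-t) t := by
    have := ((hasDerivAt_pow 2 t).neg.div_const 2)
    refine this.congr_deriv ?_
    push_cast; ring
  have h2 := (h1.exp).div_const (Real.sqrt (2 * Real.pi))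
  unfold normPdf
  refine h2.congr_deriv ?_
  ring

lemma tendsto_exp_div_atBot : Tendsto (fun t : ℝ => Real.exp t / Real.sqrt (2 * Real.pi)) atBot (𝓝 0) := by
  have := (Real.tendsto_exp_atBot).div_const (Real.sqrt (2 * Real.pi))
  simpa using this

lemma tendsto_normPdf_atBot : Tendsto normPdf atBot (𝓝 0) := by
  refine tendsto_of_tendsto_of_tendsto_of_le_of_le' tendsto_const_nhds tendsto_exp_div_atBot ?_ ?_
  · filter_upwards with t using (normPdf_pos t).le
  · filter_upwards [Iic_mem_atBot (-2:ℝ)] with t ht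
    rw [Set.mem_Iic] at ht
    rw [normPdf]
    have harg : -t ^ 2 / 2 ≤ t := by nlinarith [mul_nonneg (by linarith : (0:ℝ) ≤ -t) (by linarith : (0:ℝ) ≤ -(t+2))]
    gcongr

lemma tendsto_mul_normPdf_atBot : Tendsto (fun t : ℝ => t * normPdf t) atBot (𝓝 0) := by
  have hneg := tendsto_exp_div_atBot.neg
  rw [neg_zero] at hneg
  refine tendsto_of_tendsto_of_tendsto_of_le_of_le' hneg tendsto_const_nhds ?_ ?_
  · filter_upwards [Iic_mem_atBot (-4:ℝ)] with t ht
    rw [Set.mem_Iic] at ht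
    have h2 : -t ≤ Real.exp (-t) := by nlinarith [Real.add_one_le_exp (-t)]
    have h3 : (0:ℝ) < Real.exp (-t ^ 2 / 2) := Real.exp_pos _
    have hs : (0:ℝ) < Real.sqrt (2 * Real.pi) := by positivity
    have h4 : (-t) * Real.exp (-t ^ 2 / 2) ≤ Real.exp (-t) * Real.exp (-t ^ 2 / 2) :=
      mul_le_mul_of_nonneg_right h2 h3.le
    rw [← Real.exp_add] at h4
    have h5 : Real.exp (-t + -t ^ 2 / 2) ≤ Real.exp t := by
      apply Real.exp_le_exp.mpr
      nlinarith [mul_nonneg (by linarith : (0:ℝ) ≤ -t) (by linarith : (0:ℝ) ≤ -(t+4))]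
    have h6 : (-t) * Real.exp (-t ^ 2 / 2) ≤ Real.exp t := h4.trans h5
    rw [normPdf]
    have h7 : -Real.exp t ≤ t * Real.exp (-t ^ 2 / 2) := by nlinarith [h6]
    calc -(Real.exp t / Real.sqrt (2 * Real.pi)) = (-Real.exp t) / Real.sqrt (2 * Real.pi) := by ring
      _ ≤ (t * Real.exp (-t ^ 2 / 2)) / Real.sqrt (2 * Real.pi) := by gcongr
      _ = t * (Real.exp (-t ^ 2 / 2) / Real.sqrt (2 * Real.pi)) := by ring
  · filter_upwards [Iic_mem_atBot (0:ℝ)] with t ht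
    rw [Set.mem_Iic] at ht
    have := normPdf_pos t
    nlinarith [this]

-- FTC: first moment
lemma integral_Iic_mul_normPdf (q : ℝ) : ∫ t in Set.Iic q, t * normPdf t = -normPdf q := by
  have := integral_Iic_of_hasDerivAt_of_tendsto' (a := q) (f := fun t => -normPdf t)
    (f' := fun t => t * normPdf t) (m := 0)
    (fun x _ => (hasDerivAt_normPdf x).fun_neg.congr_deriv (by ring))
    (integrable_mul_normPdf.integrableOn)
    (by simpa using tendsto_normPdf_atBot.neg)
  simpa using this

-- FTC: (t^2 - 1) pdf
lemma integral_Iic_sq_sub_one_mul_normPdf (q : ℝ) :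
    ∫ t in Set.Iic q, (t ^ 2 - 1) * normPdf t = -(q * normPdf q) := by
  have hder : ∀ x : ℝ, HasDerivAt (fun t => -(t * normPdf t)) ((x ^ 2 - 1) * normPdf x) x := by
    intro x
    have := ((hasDerivAt_id x).mul (hasDerivAt_normPdf x)).neg
    refine this.congr_deriv ?_
    simp only [id_eq]
    ring
  have hint : Integrable (fun t : ℝ => (t ^ 2 - 1) * normPdf t) := by
    have := integrable_sq_mul_normPdf.sub integrable_normPdf
    simpa [sub_mul, Pi.sub_def] using this
  have := integral_Iic_of_hasDerivAt_of_tendsto' (a := q) (m := 0)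
    (fun x _ => hder x) hint.integrableOn
    (by simpa using tendsto_mul_normPdf_atBot.neg)
  simpa using this

-- second moment on Iic
lemma integral_Iic_sq_mul_normPdf (q : ℝ) :
    ∫ t in Set.Iic q, t ^ 2 * normPdf t = -(q * normPdf q) + normCDF q := by
  have h : ∀ t : ℝ, t ^ 2 * normPdf t = (t ^ 2 - 1) * normPdf t + normPdf t := by
    intro t; ring
  have hglob : Integrable (fun t : ℝ => (t ^ 2 - 1) * normPdf t) := by
    have := integrable_sq_mul_normPdf.sub integrable_normPdf
    simpa [sub_mul, Pi.sub_def] using this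
  have hi1 : IntegrableOn (fun t : ℝ => (t ^ 2 - 1) * normPdf t) (Set.Iic q) := hglob.integrableOn
  have hi2 : IntegrableOn normPdf (Set.Iic q) := integrable_normPdf.integrableOn
  have hadd := MeasureTheory.integral_add hi1 hi2
  simp_rw [h]
  rw [hadd, integral_Iic_sq_sub_one_mul_normPdf, normCDF]

-- symmetry: ∫_{Ioi a} = ∫_{Iic (-a)}
lemma integral_Ioi_normPdf (a : ℝ) : ∫ t in Set.Ioi a, normPdf t = normCDF (-a) := by
  rw [normCDF, ← integral_comp_neg_Ioi]
  simp_rw [normPdf_neg]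

lemma normCDF_add (a : ℝ) : normCDF a + normCDF (-a) = 1 := by
  rw [← integral_Ioi_normPdf, normCDF, ← integral_normPdf]
  rw [← MeasureTheory.setIntegral_union (Iic_disjoint_Ioi le_rfl) measurableSet_Ioi
    integrable_normPdf.integrableOn integrable_normPdf.integrableOn, Iic_union_Ioi,
    MeasureTheory.Measure.restrict_univ]

lemma normCDF_zero : normCDF 0 = 1 / 2 := by
  have := normCDF_add 0
  rw [neg_zero] at this
  linarith

lemma normCDF_mono {a b : ℝ} (h : a ≤ b) : normCDF a ≤ normCDF b := by
  rw [normCDF, normCDF]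
  apply setIntegral_mono_set integrable_normPdf.integrableOn
  · exact ae_of_all _ fun t => (normPdf_pos t).le
  · exact HasSubset.Subset.eventuallyLE (Set.Iic_subset_Iic.mpr h)

section Main

variable {β q : ℝ}

lemma q_neg (hβ : 1 / 2 < β) (hβ1 : β < 1) (hq : normCDF q = 1 - β) : q < 0 := by
  by_contra h
  push_neg at h
  have h2 := normCDF_mono h
  rw [normCDF_zero, hq] at h2
  linarith

-- Mills-type: (-q) * (1 - β) ≤ normPdf q
lemma mills (hβ1 : β < 1) (hq : normCDF q = 1 - β) : (-q) * (1 - β) ≤ normPdf q := by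
  have hint2 : IntegrableOn (fun t : ℝ => (-t) * normPdf t) (Set.Iic q) := by
    have : Integrable (fun t : ℝ => (-t) * normPdf t) := by
      simp_rw [neg_mul]
      exact integrable_mul_normPdf.neg
    exact this.integrableOn
  have h1 : ∫ t in Set.Iic q, (-q) * normPdf t ≤ ∫ t in Set.Iic q, (-t) * normPdf t := by
    apply setIntegral_mono_on ((integrable_normPdf.integrableOn).const_mul _) hint2 measurableSet_Iic
    intro t ht
    rw [Set.mem_Iic] at ht
    exact mul_le_mul_of_nonneg_right (by linarith) (normPdf_pos t).le
  rw [MeasureTheory.integral_const_mul] at h1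
  have h2 : ∫ t in Set.Iic q, (-t) * normPdf t = normPdf q := by
    simp_rw [neg_mul]
    rw [MeasureTheory.integral_neg, integral_Iic_mul_normPdf, neg_neg]
  rw [h2] at h1
  have h3 : (∫ t in Set.Iic q, normPdf t) = 1 - β := hq
  rw [h3] at h1
  exact h1

-- band bound: -(q * normPdf q) ≤ 2 * β - 1
lemma band (hβ : 1 / 2 < β) (hβ1 : β < 1) (hq : normCDF q = 1 - β) :
    -(q * normPdf q) ≤ 2 * β - 1 := by
  have hq0 : q < 0 := q_neg hβ hβ1 hq
  have hqq : q ≤ -q := by linarith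
  have hφ : 0 < normPdf q := normPdf_pos q
  have hsplit : ∫ t in Set.Ioi q, normPdf t
      = (∫ t in Set.Ioc q (-q), normPdf t) + ∫ t in Set.Ioi (-q), normPdf t := by
    rw [← MeasureTheory.setIntegral_union (Set.Ioc_disjoint_Ioi le_rfl) measurableSet_Ioi
      integrable_normPdf.integrableOn integrable_normPdf.integrableOn,
      Set.Ioc_union_Ioi_eq_Ioi hqq]
  have e1 : ∫ t in Set.Ioi q, normPdf t = β := by
    rw [integral_Ioi_normPdf]
    have := normCDF_add q
    linarith
  have e2 : ∫ t in Set.Ioi (-q), normPdf t = 1 - β := by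
    rw [integral_Ioi_normPdf, neg_neg, hq]
  have emid : ∫ t in Set.Ioc q (-q), normPdf t = 2 * β - 1 := by
    rw [e1, e2] at hsplit; linarith
  have hlow : (-q - q) * normPdf q ≤ ∫ t in Set.Ioc q (-q), normPdf t := by
    have hconst : ∫ _t in Set.Ioc q (-q), normPdf q = (-q - q) * normPdf q := by
      rw [MeasureTheory.setIntegral_const, Real.volume_real_Ioc_of_le (by linarith), smul_eq_mul]
    rw [← hconst]
    apply setIntegral_mono_on (integrableOn_const (by rw [Real.volume_Ioc]; exact ENNReal.ofReal_ne_top))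
      integrable_normPdf.integrableOn measurableSet_Ioc
    intro t ht
    obtain ⟨ht1, ht2⟩ := ht
    rw [normPdf, normPdf]
    rw [div_le_div_iff_of_pos_right (by positivity)]
    apply Real.exp_le_exp.mpr
    nlinarith [mul_nonneg (by linarith : (0:ℝ) ≤ -q - t) (by linarith : (0:ℝ) ≤ -q + t)]
  rw [emid] at hlow
  nlinarith

set_option maxHeartbeats 1000000 in
-- Cauchy-Schwarz: normPdf q ^ 2 ≤ (1 - β) * ((1-β) + (-(q * normPdf q)))
lemma cs (hβ1 : β < 1) (hq0 : q < 0) (hq : normCDF q = 1 - β) :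
    normPdf q ^ 2 ≤ (1 - β) * ((1 - β) + -(q * normPdf q)) := by
  set M1 : ℝ := -(normPdf q) with hM1
  set M2 : ℝ := (1 - β) + -(q * normPdf q) with hM2
  have hnonneg : 0 ≤ ∫ t in Set.Iic q, (M1 * t - M2) ^ 2 * normPdf t :=
    setIntegral_nonneg measurableSet_Iic (fun t _ => mul_nonneg (sq_nonneg _) (normPdf_pos t).le)
  have ha : IntegrableOn (fun t : ℝ => M1 ^ 2 * (t ^ 2 * normPdf t)) (Set.Iic q) :=
    (integrable_sq_mul_normPdf.integrableOn).const_mul _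
  have hb : IntegrableOn (fun t : ℝ => (2 * M1 * M2) * (t * normPdf t)) (Set.Iic q) :=
    (integrable_mul_normPdf.integrableOn).const_mul _
  have hc : IntegrableOn (fun t : ℝ => M2 ^ 2 * normPdf t) (Set.Iic q) :=
    (integrable_normPdf.integrableOn).const_mul _
  have hexp : ∀ t : ℝ, (M1 * t - M2) ^ 2 * normPdf t
      = (M1 ^ 2 * (t ^ 2 * normPdf t) - (2 * M1 * M2) * (t * normPdf t)) + M2 ^ 2 * normPdf t := by
    intro t; ring
  have hval : ∫ t in Set.Iic q, (M1 * t - M2) ^ 2 * normPdf t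
      = (M1 ^ 2 * (∫ t in Set.Iic q, t ^ 2 * normPdf t)
        - (2 * M1 * M2) * (∫ t in Set.Iic q, t * normPdf t))
        + M2 ^ 2 * (∫ t in Set.Iic q, normPdf t) := by
    have hab : IntegrableOn
        (fun t : ℝ => M1 ^ 2 * (t ^ 2 * normPdf t) - (2 * M1 * M2) * (t * normPdf t))
        (Set.Iic q) := ha.sub hb
    simp_rw [hexp]
    rw [MeasureTheory.integral_add hab hc, MeasureTheory.integral_sub ha hb,
      MeasureTheory.integral_const_mul, MeasureTheory.integral_const_mul,
      MeasureTheory.integral_const_mul]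
  have h0 : (∫ t in Set.Iic q, normPdf t) = 1 - β := hq
  rw [hval, integral_Iic_sq_mul_normPdf, integral_Iic_mul_normPdf, h0, hq] at hnonneg
  have hM2v : M2 = -(q * normPdf q) + (1 - β) := by rw [hM2]; ring
  have hφ : 0 < normPdf q := normPdf_pos q
  have hM2pos : 0 < M2 := by rw [hM2]; nlinarith
  rw [hM1, ← hM2v] at hnonneg
  have key : 0 ≤ M2 * ((1 - β) * M2 - normPdf q ^ 2) := by nlinarith [hnonneg]
  nlinarith [key, hM2pos]

end Main

theorem risk_coefficients_ordered (β : ℝ) (hβ : 1 / 2 < β) (hβ1 : β < 1)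
    (q : ℝ) (hq : normCDF q = 1 - β) :
    -- coefficient inequalities
    (-q ≤ -(∫ t in Set.Iic q, t * normPdf t) / (1 - β)) ∧
    (-(∫ t in Set.Iic q, t * normPdf t) / (1 - β) ≤ Real.sqrt (β / (1 - β))) ∧
    ((2 * β - 1) / (2 * Real.sqrt (β * (1 - β))) ≤ Real.sqrt (β / (1 - β))) ∧
    -- consequences for the risk measures
    (∀ (n : ℕ) (Q : Matrix (Fin n) (Fin n) ℝ), Q.PosSemidef → ∀ (μ x : Fin n → ℝ),
      let s := Real.sqrt (dotProduct x (Q.mulVec x))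
      (-q * s - dotProduct μ x
          ≤ (-(∫ t in Set.Iic q, t * normPdf t) / (1 - β)) * s - dotProduct μ x) ∧
      ((-(∫ t in Set.Iic q, t * normPdf t) / (1 - β)) * s - dotProduct μ x
          ≤ Real.sqrt (β / (1 - β)) * s - dotProduct μ x) ∧
      ((2 * β - 1) / (2 * Real.sqrt (β * (1 - β))) * s - dotProduct μ x
          ≤ Real.sqrt (β / (1 - β)) * s - dotProduct μ x)) := by
  have hβ0 : (0:ℝ) < 1 - β := by linarith
  have hq0 : q < 0 := q_neg hβ hβ1 hq
  have hφ : 0 < normPdf q := normPdf_pos q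
  have hM1 : ∫ t in Set.Iic q, t * normPdf t = -normPdf q := integral_Iic_mul_normPdf q
  have hcs := cs hβ1 hq0 hq
  have hband := band hβ hβ1 hq
  have hkey : normPdf q ^ 2 ≤ β * (1 - β) := by nlinarith [hcs, hband, hβ0]
  have hdivnn : (0:ℝ) ≤ β / (1 - β) := div_nonneg (by linarith) (by linarith)
  have hs2 : Real.sqrt (β * (1 - β)) = Real.sqrt (β / (1 - β)) * (1 - β) := by
    rw [show β * (1 - β) = (β / (1 - β)) * (1 - β) ^ 2 by field_simp,
      Real.sqrt_mul hdivnn, Real.sqrt_sq hβ0.le]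
  have part1 : -q ≤ -(∫ t in Set.Iic q, t * normPdf t) / (1 - β) := by
    rw [hM1, neg_neg, le_div_iff₀ hβ0]
    exact mills hβ1 hq
  have hφle : normPdf q ≤ Real.sqrt (β * (1 - β)) := by
    rw [← Real.sqrt_sq hφ.le]
    exact Real.sqrt_le_sqrt hkey
  have part2 : -(∫ t in Set.Iic q, t * normPdf t) / (1 - β) ≤ Real.sqrt (β / (1 - β)) := by
    rw [hM1, neg_neg, div_le_iff₀ hβ0]
    calc normPdf q ≤ Real.sqrt (β * (1 - β)) := hφle
      _ = Real.sqrt (β / (1 - β)) * (1 - β) := hs2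
  have hsβ : 0 < Real.sqrt (β * (1 - β)) := Real.sqrt_pos.mpr (by nlinarith)
  have hmulid : Real.sqrt (β / (1 - β)) * Real.sqrt (β * (1 - β)) = β := by
    rw [← Real.sqrt_mul hdivnn, show β / (1 - β) * (β * (1 - β)) = β ^ 2 by field_simp,
      Real.sqrt_sq (by linarith)]
  have part3 : (2 * β - 1) / (2 * Real.sqrt (β * (1 - β))) ≤ Real.sqrt (β / (1 - β)) := by
    rw [div_le_iff₀ (by positivity)]
    nlinarith [hmulid]
  refine ⟨part1, part2, part3, ?_⟩
  intro n Q hQ μ x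
  exact ⟨sub_le_sub_right (mul_le_mul_of_nonneg_right part1 (Real.sqrt_nonneg _)) _,
    sub_le_sub_right (mul_le_mul_of_nonneg_right part2 (Real.sqrt_nonneg _)) _,
    sub_le_sub_right (mul_le_mul_of_nonneg_right part3 (Real.sqrt_nonneg _)) _⟩
end
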